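/- Let G be a triangle-free graph, let F_1, …, F_n be matchings of size n in G, and let R be a rainbow matching of maximum size. Let G₁ be an unrepresented matching, let e, f ∈ R, and let g_e, g_f, g_{ef} ∈ G₁ witness that {e, f} is half-G₁-wasteful (in particular g_e intersects e and no other edge of R). Suppose G₂ is another unrepresented matching, G₂ ≠ G₁, and g'_e ∈ G₂ intersects e in one vertex and intersects no other edge of R. Then g_e, g'_e and e share a common vertex. -/
import Mathlib


/-- Two graph edges intersect (share a vertex). -/
def Meets {V : Type*} (e f : Sym2 V) : Prop := ∃ v, v ∈ e ∧ v ∈ f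

/-- `g` intersects `e` and no other edge of the matching `R`. -/
def MeetsOnly {V : Type*} (R : Finset (Sym2 V)) (g e : Sym2 V) : Prop :=
  Meets g e ∧ ∀ f ∈ R, f ≠ e → ¬ Meets g f

/-- A graph containing a triangle (as three pairwise adjacent vertices) has a
3-cycle. -/
lemma tri_aux {V : Type*} (G : SimpleGraph V)
    (htf : ∀ (v : V) (w : G.Walk v v), w.IsCycle → w.length ≠ 3)
    {x y z : V} (hxy : G.Adj x y) (hyz : G.Adj y z) (hzx : G.Adj z x) : False := by
  have hxz : x ≠ z := fun h => (h ▸ hzx).ne rfl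
  refine htf x (.cons hxy (.cons hyz (.cons hzx .nil))) ?_ rfl
  simp [SimpleGraph.Walk.isCycle_def, SimpleGraph.Walk.isTrail_def,
    Sym2.eq_iff, hxy.ne, hyz.ne, hzx.ne, hxz, hxy.ne', hyz.ne', hzx.ne', Ne.symm hxz]

/-- If an edge of a graph contains two distinct vertices, they are adjacent. -/
lemma adj_of_mem_edge {V : Type*} {G : SimpleGraph V} {s : Sym2 V} {u v : V}
    (hs : s ∈ G.edgeSet) (hu : u ∈ s) (hv : v ∈ s) (huv : u ≠ v) : G.Adj u v := by
  have : s = s(u, v) := ((Sym2.mem_and_mem_iff huv).1 ⟨hu, hv⟩)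
  rw [this] at hs
  exact hs

/-- In a triangle-free graph with `F₁, …, Fₙ` matchings of size `n` and
`R = I.image c` a maximum-size rainbow matching: if `e, f ∈ R` and `g_e, g_f, g_{ef}` in
an unrepresented matching `F i₁` witness that `{e, f}` is half-`F i₁`-wasteful, and
`g'_e` belongs to another unrepresented matching `F i₂` and intersects `e` in one vertex
and no other edge of `R`, then `g_e`, `g'_e` and `e` share a common vertex. -/
theorem stmt_11 {V : Type*} [DecidableEq V] (G : SimpleGraph V) (n : ℕ)
    (htf : ∀ (v : V) (w : G.Walk v v), w.IsCycle → w.length ≠ 3)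
    (F : Fin n → Finset (Sym2 V))
    (hedges : ∀ i, ∀ e ∈ F i, e ∈ G.edgeSet)
    (hmatch : ∀ i, ∀ e ∈ F i, ∀ f ∈ F i, e ≠ f → ∀ v, v ∈ e → v ∉ f)
    (hsize : ∀ i, (F i).card = n)
    (I : Finset (Fin n)) (c : Fin n → Sym2 V)
    (hc : ∀ i ∈ I, c i ∈ F i)
    (hdisj : ∀ i ∈ I, ∀ j ∈ I, i ≠ j → ∀ v, v ∈ c i → v ∉ c j)
    (hmax : ∀ (J : Finset (Fin n)) (d : Fin n → Sym2 V),
      (∀ i ∈ J, d i ∈ F i) →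
      (∀ i ∈ J, ∀ j ∈ J, i ≠ j → ∀ v, v ∈ d i → v ∉ d j) →
      J.card ≤ I.card)
    (i₁ i₂ : Fin n) (hi₁ : i₁ ∉ I) (hi₂ : i₂ ∉ I) (hne : i₂ ≠ i₁)
    (e f : Sym2 V) (he : e ∈ I.image c) (hf : f ∈ I.image c) (hef : e ≠ f)
    (ge gf gef : Sym2 V) (hge : ge ∈ F i₁) (hgf : gf ∈ F i₁) (hgef : gef ∈ F i₁)
    (hge_e : MeetsOnly (I.image c) ge e)
    (hgf_f : MeetsOnly (I.image c) gf f)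
    (hgef_e : Meets gef e) (hgef_f : Meets gef f)
    (g'e : Sym2 V) (hg'e : g'e ∈ F i₂)
    (hg'e_e : MeetsOnly (I.image c) g'e e) :
    ∃ v, v ∈ ge ∧ v ∈ g'e ∧ v ∈ e := by
  by_contra hcon
  push_neg at hcon
  obtain ⟨x, hxge, hxe⟩ := hge_e.1
  obtain ⟨y, hyg'e, hye⟩ := hg'e_e.1
  obtain ⟨i₀, hi₀I, hci₀⟩ := Finset.mem_image.1 he
  -- x ∉ g'e, y ∉ ge, x ≠ y
  have hxg'e : x ∉ g'e := fun h => hcon x hxge h hxe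
  have hyge : y ∉ ge := fun h => hcon y h hyg'e hye
  have hxy : x ≠ y := fun h => hyge (h ▸ hxge)
  have heE : e ∈ G.edgeSet := hci₀ ▸ hedges i₀ _ (hc i₀ hi₀I)
  have hadjxy : G.Adj x y := adj_of_mem_edge heE hxe hye hxy
  -- Case 1: ge and g'e share a vertex `a` — triangle x y a, contradiction.
  by_cases hshare : ∃ a, a ∈ ge ∧ a ∈ g'e
  · obtain ⟨a, hage, hag'e⟩ := hshare
    have hax : a ≠ x := fun h => hxg'e (h ▸ hag'e)
    have hay : a ≠ y := fun h => hyge (h ▸ hage)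
    have hadjxa : G.Adj x a := adj_of_mem_edge (hedges i₁ ge hge) hxge hage hax.symm
    have hadjya : G.Adj y a := adj_of_mem_edge (hedges i₂ g'e hg'e) hyg'e hag'e hay.symm
    exact tri_aux G htf hadjxy hadjya hadjxa.symm
  -- Case 2: ge and g'e are disjoint — extend the rainbow matching, contradicting maximality.
  push_neg at hshare
  -- any other edge of R is ≠ e and disjoint from ge, g'e
  have hcj_ne_e : ∀ j ∈ I, j ≠ i₀ → c j ≠ e := by
    intro j hj hji₀ hcj
    exact hdisj i₀ hi₀I j hj (Ne.symm hji₀) x (hci₀ ▸ hxe) (hcj ▸ hxe)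
  have hge_cj : ∀ j ∈ I, j ≠ i₀ → ∀ v, v ∈ ge → v ∉ c j := by
    intro j hj hji₀ v hv hvc
    exact hge_e.2 (c j) (Finset.mem_image_of_mem c hj) (hcj_ne_e j hj hji₀) ⟨v, hv, hvc⟩
  have hg'e_cj : ∀ j ∈ I, j ≠ i₀ → ∀ v, v ∈ g'e → v ∉ c j := by
    intro j hj hji₀ v hv hvc
    exact hg'e_e.2 (c j) (Finset.mem_image_of_mem c hj) (hcj_ne_e j hj hji₀) ⟨v, hv, hvc⟩
  set J : Finset (Fin n) := insert i₁ (insert i₂ (I.erase i₀)) with hJ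
  set d : Fin n → Sym2 V := fun j => if j = i₁ then ge else if j = i₂ then g'e else c j with hd
  have hd1 : d i₁ = ge := by simp [hd]
  have hd2 : d i₂ = g'e := by simp [hd, hne]
  have hdj : ∀ j ∈ I.erase i₀, d j = c j := by
    intro j hj
    have hjI := Finset.mem_of_mem_erase hj
    have h1 : j ≠ i₁ := fun h => hi₁ (h ▸ hjI)
    have h2 : j ≠ i₂ := fun h => hi₂ (h ▸ hjI)
    simp [hd, h1, h2]
  have hmem : ∀ i ∈ J, d i ∈ F i := by
    intro i hi
    rcases Finset.mem_insert.1 hi with rfl | hi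
    · rwa [hd1]
    rcases Finset.mem_insert.1 hi with rfl | hi
    · rwa [hd2]
    · rw [hdj i hi]; exact hc i (Finset.mem_of_mem_erase hi)
  -- disjointness of d on J
  have key : ∀ i ∈ J, ∀ j ∈ J, i ≠ j → ∀ v, v ∈ d i → v ∉ d j := by
    have base : ∀ j ∈ I.erase i₀, ∀ v,
        (v ∈ ge → v ∉ d j) ∧ (v ∈ g'e → v ∉ d j) := by
      intro j hj v
      rw [hdj j hj]
      obtain ⟨hji₀, hjI⟩ := Finset.mem_erase.1 hj
      exact ⟨hge_cj j hjI hji₀ v, hg'e_cj j hjI hji₀ v⟩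
    intro i hi j hj hij v hvi hvj
    rcases Finset.mem_insert.1 hi with rfl | hi' <;>
      [skip; rcases Finset.mem_insert.1 hi' with rfl | hi''] <;>
    (rcases Finset.mem_insert.1 hj with rfl | hj' <;>
      [skip; rcases Finset.mem_insert.1 hj' with rfl | hj''])
    · exact hij rfl
    · exact hshare v (hd1 ▸ hvi) (hd2 ▸ hvj)
    · exact (base j hj'' v).1 (hd1 ▸ hvi) hvj
    · exact hshare v (hd1 ▸ hvj) (hd2 ▸ hvi)
    · exact hij rfl
    · exact (base j hj'' v).2 (hd2 ▸ hvi) hvj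
    · exact (base i hi'' v).1 (hd1 ▸ hvj) hvi
    · exact (base i hi'' v).2 (hd2 ▸ hvj) hvi
    · rw [hdj i hi''] at hvi
      rw [hdj j hj''] at hvj
      exact hdisj i (Finset.mem_of_mem_erase hi'') j (Finset.mem_of_mem_erase hj'') hij v hvi hvj
  have hcard := hmax J d hmem key
  have h1 : i₁ ∉ insert i₂ (I.erase i₀) := by
    simp only [Finset.mem_insert, Finset.mem_erase]
    push_neg
    exact ⟨fun h => hne (h.symm), fun _ => hi₁⟩
  have h2 : i₂ ∉ I.erase i₀ := fun h => hi₂ (Finset.mem_of_mem_erase h)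
  have hIpos : 1 ≤ I.card := Finset.card_pos.2 ⟨i₀, hi₀I⟩
  rw [hJ, Finset.card_insert_of_notMem h1, Finset.card_insert_of_notMem h2,
    Finset.card_erase_of_mem hi₀I] at hcard
  omega
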